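/- Fix compositions α of m and β of n with l = ℓ(α), k = ℓ(β), I = set(α), J = set(β). Then the map Ψ : 𝒜_{α,β} → binom([l+k],k) defined by Ψ(A) := std_{(I #_A J) ⊔ {z_A} ⊔ {m+n}}(J̃_A) is injective. -/

import Mathlib

namespace QSymPaper

attribute [local instance 0] Classical.propDecidable

noncomputable section

/-- A composition condition: all parts are positive. -/
def IsComp (α : List ℕ) : Prop := ∀ a ∈ α, 0 < a

/-- `set(α)`: the set of proper partial sums of `α`. -/
def setComp (α : List ℕ) : Finset ℕ :=
  (Finset.range (α.length - 1)).image (fun j => (α.take (j + 1)).sum)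

/-- `comp(S)` for `S ⊆ [n−1]`: the composition of `n` whose set of partial sums is `S`. -/
def compOf (n : ℕ) (S : Finset ℕ) : List ℕ :=
  if n = 0 then []
  else
    let l := S.sort (· ≤ ·) ++ [n]
    List.zipWith (fun a b => a - b) l (0 :: l)

/-- Monomial quasisymmetric function `M_α`, in the variables of the sub-alphabet `P`. -/
def Mqs (σ : Type) [LinearOrder σ] (F : Type) [CommRing F] (P : σ → Prop) (α : List ℕ) :
    MvPowerSeries σ F :=
  fun (d : σ →₀ ℕ) => if (∀ i ∈ d.support, P i) ∧ (d.support.sort (· ≤ ·)).map (fun i => d i) = α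
    then 1 else 0

/-- Fundamental quasisymmetric function `L_{comp(S)}` (for `S ⊆ [n−1]`). -/
def Lqs (σ : Type) [LinearOrder σ] (F : Type) [CommRing F] (P : σ → Prop)
    (n : ℕ) (S : Finset ℕ) : MvPowerSeries σ F :=
  ∑ T ∈ (Finset.Icc 1 (n - 1)).powerset.filter (fun T => S ⊆ T), Mqs σ F P (compOf n T)

/-- The weight `wt_I(i) = |[1,i−1] ∩ I| + 1`. -/
def wt (I : Finset ℕ) (i : ℕ) : ℕ := (Finset.Icc 1 (i - 1) ∩ I).card + 1

/-- `A∁ = [N] ∖ A`. -/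
def coSet (N : ℕ) (A : Finset ℕ) : Finset ℕ := Finset.Icc 1 N \ A

/-- `e(A)`: right endpoints of the maximal intervals of `A`, except `N`. -/
def eSet (N : ℕ) (A : Finset ℕ) : Finset ℕ := (A.filter (fun b => b + 1 ∉ A)).erase N

/-- `ē(A) = e(A) ∪ e(A∁)`. -/
def ebar (N : ℕ) (A : Finset ℕ) : Finset ℕ := eSet N A ∪ eSet N (coSet N A)

/-- `T_S`: the image of `T ⊆ [|S|]` under the increasing enumeration of `S` (1-based). -/
def embedIn (S T : Finset ℕ) : Finset ℕ :=
  T.image (fun t => (S.sort (· ≤ ·)).getD (t - 1) 0)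

/-- `std_S(T)`: ranks within `S` of the elements of `T ⊆ S`. -/
def stdSet (S T : Finset ℕ) : Finset ℕ :=
  T.image (fun t => (S.filter (· ≤ t)).card)

/-- `I #_A J := I_{A∁} ⊔ J_A`. -/
def hashAJ (N : ℕ) (A I J : Finset ℕ) : Finset ℕ :=
  embedIn (coSet N A) I ∪ embedIn A J

/-- `I ⧢_A J := e(A) ⊔ ((I #_A J) ∖ ē(A))`. -/
def shSet (N : ℕ) (A I J : Finset ℕ) : Finset ℕ :=
  eSet N A ∪ (hashAJ N A I J \ ebar N A)

/-- The `i`-th entry (1-based) of the word `w`. -/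
def wordEntry (w : List ℕ) (i : ℕ) : ℕ := w.getD (i - 1) 0

/-- The descent set of the word `w`. -/
def wordDes (w : List ℕ) : Finset ℕ :=
  (Finset.Icc 1 (w.length - 1)).filter (fun i => wordEntry w (i + 1) < wordEntry w i)

/-- `u ⧢_A v`: the word of length `N` whose subword in positions `A` is `v`
and whose subword in the complementary positions is `u`. -/
def shWord (N : ℕ) (u v : List ℕ) (A : Finset ℕ) : List ℕ :=
  (List.range N).map (fun p0 =>
    if p0 + 1 ∈ A then v.getD ((A.filter (· ≤ p0 + 1)).card - 1) 0
    else u.getD (((coSet N A).filter (· ≤ p0 + 1)).card - 1) 0)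

/-- `v[m]`: the `m`-shifted word. -/
def shiftWord (m : ℕ) (v : List ℕ) : List ℕ := v.map (· + m)

/-- `u` is (the word of) a permutation in `S_m`. -/
def IsPermWord (m : ℕ) (u : List ℕ) : Prop := u.Perm (List.range' 1 m)

/-- `z_A`. -/
def zA (N : ℕ) (A : Finset ℕ) : ℕ :=
  if N ∈ A then (coSet N A).max.unbotD 0 else A.max.unbotD 0

/-- `J̃_A`. -/
def Jtilde (N : ℕ) (A J : Finset ℕ) : Finset ℕ :=
  if N ∈ A then insert N (embedIn A J) else insert (zA N A) (embedIn A J)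

/-- `𝒜_{α,β}` (as a set of subsets of `[m+n]`, where `I = set α`, `J = set β`). -/
def calA (m n : ℕ) (I J : Finset ℕ) : Finset (Finset ℕ) :=
  ((Finset.Icc 1 (m + n)).powersetCard n).filter
    (fun A => ebar (m + n) A \ {zA (m + n) A} ⊆ hashAJ (m + n) A I J)

/-- `Ψ(A) = std_{(I #_A J) ⊔ {z_A} ⊔ {m+n}}(J̃_A)`. -/
def Psi (m n : ℕ) (I J : Finset ℕ) (A : Finset ℕ) : Finset ℕ :=
  stdSet (insert (m + n) (insert (zA (m + n) A) (hashAJ (m + n) A I J)))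
    (Jtilde (m + n) A J)

/-- `α ⧢_D β`: the shuffle of the compositions `α` and `β` whose `β`-entries occupy `D`. -/
def shComp (α β : List ℕ) (D : Finset ℕ) : List ℕ :=
  shWord (α.length + β.length) α β D

/-- `Σ(α,β,D,i)`: the sum of the first `d_i − 1` entries of `α ⧢_D β`. -/
def psum (α β : List ℕ) (D : Finset ℕ) (i : ℕ) : ℕ :=
  ((shComp α β D).take ((D.sort (· ≤ ·)).getD (i - 1) 0 - 1)).sum

/-- `Φ(D)`. -/
def Phi (α β : List ℕ) (D : Finset ℕ) : Finset ℕ :=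
  (Finset.Icc 1 β.length).biUnion (fun i =>
    Finset.Icc (psum α β D i + 1) (psum α β D i + β.getD (i - 1) 0))

/-- The index set for two-way overlapping shuffles of `α` and `β`: triples `(D, S₁, S₂)`
where `D` records the shuffle, `S₁` the positions of `+₁` (an `α`-entry immediately
followed by a `β`-entry) and `S₂` the positions of `+₂`. -/
def twoWayIdx (α β : List ℕ) : Finset (Finset ℕ × Finset ℕ × Finset ℕ) :=
  (((Finset.Icc 1 (α.length + β.length)).powersetCard β.length) ×ˢ
    ((Finset.Icc 1 (α.length + β.length - 1)).powerset ×ˢ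
      (Finset.Icc 1 (α.length + β.length - 1)).powerset)).filter
    (fun x => (∀ p ∈ x.2.1, p ∉ x.1 ∧ p + 1 ∈ x.1) ∧ (∀ p ∈ x.2.2, p ∈ x.1 ∧ p + 1 ∉ x.1))

/-- `γ⁺`: the composition obtained from the two-way overlapping shuffle `(D,S₁,S₂)`
by carrying out the marked additions. -/
def plusComp (α β : List ℕ) (D S₁ S₂ : Finset ℕ) : List ℕ :=
  compOf (α.sum + β.sum)
    (((Finset.Icc 1 (α.length + β.length - 1)) \ (S₁ ∪ S₂)).image
      (fun p => ((shComp α β D).take p).sum))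

/-- `D_α(q,t)`. -/
def Dqt (σ : Type) [LinearOrder σ] (F : Type) [Field F] (P : σ → Prop) (q t : F)
    (α : List ℕ) : MvPowerSeries σ F :=
  if α = [] then 1
  else ∑ T ∈ (setComp α).powerset,
    (q ^ ((T.card + 1 : ℤ) - (α.sum : ℤ)) * (-t) ^ (α.length - (T.card + 1))) •
      Mqs σ F P (compOf α.sum T)

/-- Enriched monomial quasisymmetric function with generic weight `c`
(`c = 2` gives `η_α`, `c = q+1` gives `η_α^{(q)}`). -/
def etaQ (σ : Type) [LinearOrder σ] (F : Type) [CommRing F] (P : σ → Prop) (c : F)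
    (α : List ℕ) : MvPowerSeries σ F :=
  if α = [] then 1
  else ∑ T ∈ (setComp α).powerset, (c ^ (T.card + 1)) • Mqs σ F P (compOf α.sum T)

/-- `K_{comp(J)}(ν)` (for `J ⊆ [n−1]`, `n ≥ 1`). -/
def Kset (σ : Type) [LinearOrder σ] (P : σ → Prop) (ν : ℤ) (n : ℕ) (J : Finset ℕ) :
    MvPowerSeries σ ℂ :=
  ((ν : ℂ) ^ (-((n : ℤ) - 1))) •
    ∑ I ∈ (Finset.Icc 1 (n - 1)).powerset,
      ((-1 : ℂ) ^ ((J \ I).card) *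
        ((ν : ℂ) - 1) ^ ((Finset.Icc 1 (n - 1) \ (I ∪ J)).card)) • Lqs σ ℂ P n I

/-- `K_α(ν)` for a composition `α`. -/
def Kcomp (σ : Type) [LinearOrder σ] (P : σ → Prop) (ν : ℤ) (α : List ℕ) :
    MvPowerSeries σ ℂ :=
  if α = [] then 1 else Kset σ P ν α.sum (setComp α)

/-- The quasisymmetric Hall–Littlewood function `G_I(q)` (for `I ⊆ [n−1]`),
with `q = RatFunc.X`. -/
def Gq (σ : Type) [LinearOrder σ] (P : σ → Prop) (n : ℕ) (I : Finset ℕ) :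
    MvPowerSeries σ (RatFunc ℂ) :=
  ∑ J ∈ (Finset.Icc 1 (n - 1)).powerset.filter (fun J => I ⊆ J),
    ((-1 : RatFunc ℂ) ^ ((J \ I).card) * RatFunc.X ^ (∑ i ∈ J \ I, wt I i)) •
      Lqs σ (RatFunc ℂ) P n J

/-- `G_γ(q)` for a composition `γ`. -/
def Gcomp (σ : Type) [LinearOrder σ] (P : σ → Prop) (γ : List ℕ) :
    MvPowerSeries σ (RatFunc ℂ) :=
  if γ = [] then 1 else Gq σ P γ.sum (setComp γ)

/-- The `q`-monomial quasisymmetric function `M_{comp(I)}(q)` (for `I ⊆ [n−1]`). -/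
def MqF (σ : Type) [LinearOrder σ] (P : σ → Prop) (n : ℕ) (I : Finset ℕ) :
    MvPowerSeries σ (RatFunc ℂ) :=
  ∑ T ∈ (Finset.Icc 1 (n - 1)).powerset.filter (fun T => I ⊆ T),
    ((-RatFunc.X : RatFunc ℂ) ^ (T.card - I.card)) • Lqs σ (RatFunc ℂ) P n T

/-- `M_γ(q)` for a composition `γ`. -/
def Mqcomp (σ : Type) [LinearOrder σ] (P : σ → Prop) (γ : List ℕ) :
    MvPowerSeries σ (RatFunc ℂ) :=
  if γ = [] then 1 else MqF σ P γ.sum (setComp γ)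

/-- `P_w`: positions of the nonzero entries of `w`. -/
def Pset (w : List ℕ) : Finset ℕ :=
  (Finset.Icc 1 w.length).filter (fun i => wordEntry w i ≠ 0)

/-- Standardized descent set `sDes(w)`. -/
def sDes (w : List ℕ) : Finset ℕ := (stdSet (Pset w) (wordDes w)).erase (Pset w).card

def wLe (m : ℕ) (w : List ℕ) : List ℕ := w.filter (fun a => decide (a ≤ m))
def wGt (m : ℕ) (w : List ℕ) : List ℕ := (w.filter (fun a => decide (m < a))).map (· - m)
def wLe0 (m : ℕ) (w : List ℕ) : List ℕ := w.map (fun a => if a ≤ m then a else 0)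
def wGt0 (m : ℕ) (w : List ℕ) : List ℕ := w.map (fun a => if a ≤ m then 0 else a)

/-- 1-based position of `a` in the list `l`. -/
def posIn (l : List ℕ) (a : ℕ) : ℕ := l.idxOf a + 1

/-- The standardized `q`-weight `sw^w_m`. -/
def swq (m : ℕ) (w : List ℕ) (i : ℕ) : RatFunc ℂ :=
  if wordEntry w i ≤ m ∧ wordEntry w (i + 1) ≤ m then
    RatFunc.X ^ wt (wordDes (wLe m w)) (posIn (wLe m w) (wordEntry w i))
  else if m < wordEntry w i ∧ m < wordEntry w (i + 1) then
    RatFunc.X ^ wt (wordDes (wGt m w)) (posIn (wGt m w) (wordEntry w i - m))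
  else 0

/-- `c_q(u,v) = (1−q^u)(1−q^{u−1})⋯(1−q^{u−v+1})`. -/
def cq (u v : ℕ) : RatFunc ℂ := ∏ j ∈ Finset.range v, (1 - RatFunc.X ^ (u - j))

/-- The `t`-th smallest element of `I` (1-based). -/
def nthElt (I : Finset ℕ) (t : ℕ) : ℕ := (I.sort (· ≤ ·)).getD (t - 1) 0

/-- `Bre(I,J)_t`. -/
def bre (I J : Finset ℕ) (t : ℕ) : ℕ :=
  if t = 0 then 0 else (J.filter (· ≤ nthElt I t)).card

/-- `s(I,J)`. -/
def sIJ (I J : Finset ℕ) : ℕ :=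
  ∑ t ∈ Finset.Icc 1 I.card, t * (bre I J t - bre I J (t - 1) - 1)

/-- `Bre(I,J)` as a set. -/
def breSet (I J : Finset ℕ) : Finset ℕ := (Finset.Icc 1 I.card).image (bre I J)

/-- `g(I,J)`. -/
def gIJ (I J : Finset ℕ) : ℕ := ∑ k ∈ Finset.Icc 1 J.card \ breSet I J, k

/-- Near-concatenation `α ⊙ β`. -/
def nearConcat : List ℕ → List ℕ → List ℕ
  | [], β => β
  | α, [] => α
  | α, b :: βs => α.dropLast ++ (α.getLast?.getD 0 + b) :: βs

/-- The field `ℂ(q,t)`. -/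
abbrev Fqt : Type := FractionRing (MvPolynomial (Fin 2) ℂ)

/-- The variable `q` of `ℂ(q,t)`. -/
def qv : Fqt := algebraMap (MvPolynomial (Fin 2) ℂ) Fqt (MvPolynomial.X 0)

/-- The variable `t` of `ℂ(q,t)`. -/
def tv : Fqt := algebraMap (MvPolynomial (Fin 2) ℂ) Fqt (MvPolynomial.X 1)

/-- The combined two-alphabet variable set, every `x`-variable smaller
than every `y`-variable. -/
abbrev Sig2 : Type := ℕ ⊕ₗ ℕ

/-- The full alphabet. -/
def PTot : Sig2 → Prop := fun _ => True

/-- The first (`x`) alphabet. -/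
def PLft : Sig2 → Prop := fun s => (ofLex s).isLeft = true

/-- The second (`y`) alphabet. -/
def PRgt : Sig2 → Prop := fun s => (ofLex s).isRight = true


section Injectivity


/-- rank: number of elements of `A` that are `≤ x`. -/
def rk (A : Finset ℕ) (x : ℕ) : ℕ := (A.filter (· ≤ x)).card

/-- the `i`-th smallest element of `A` (1-based). -/
def sel (A : Finset ℕ) (i : ℕ) : ℕ := (A.sort (· ≤ ·)).getD (i - 1) 0

lemma sel_mem {A : Finset ℕ} {i : ℕ} (h1 : 1 ≤ i) (h2 : i ≤ A.card) : sel A i ∈ A := by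
  have hl : i - 1 < (A.sort (· ≤ ·)).length := by
    rw [Finset.length_sort]; omega
  rw [sel, List.getD_eq_getElem _ _ hl]
  exact (Finset.mem_sort _).1 (List.getElem_mem _)

lemma sel_lt_sel {A : Finset ℕ} {i j : ℕ} (h1 : 1 ≤ i) (hij : i < j) (h2 : j ≤ A.card) :
    sel A i < sel A j := by
  have hj : j - 1 < (A.sort (· ≤ ·)).length := by rw [Finset.length_sort]; omega
  have hi : i - 1 < (A.sort (· ≤ ·)).length := by rw [Finset.length_sort]; omega
  have hs := (Finset.sortedLT_sort A).pairwise
  rw [sel, sel, List.getD_eq_getElem _ _ hi, List.getD_eq_getElem _ _ hj]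
  have := List.pairwise_iff_get.1 hs ⟨i-1, hi⟩ ⟨j-1, hj⟩ (by simp; omega)
  simpa using this

lemma rk_mono {A : Finset ℕ} {x y : ℕ} (h : x ≤ y) : rk A x ≤ rk A y := by
  apply Finset.card_le_card
  intro a ha
  rw [Finset.mem_filter] at ha ⊢
  exact ⟨ha.1, le_trans ha.2 h⟩

lemma rk_le_card {A : Finset ℕ} {x : ℕ} : rk A x ≤ A.card :=
  Finset.card_le_card (Finset.filter_subset _ _)

lemma rk_pos {A : Finset ℕ} {x : ℕ} (h : x ∈ A) : 1 ≤ rk A x :=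
  Finset.card_pos.2 ⟨x, Finset.mem_filter.2 ⟨h, le_refl x⟩⟩

lemma rk_strict {A : Finset ℕ} {x y : ℕ} (hy : y ∈ A) (h : x < y) : rk A x < rk A y := by
  apply Finset.card_lt_card
  constructor
  · intro a ha
    rw [Finset.mem_filter] at ha ⊢
    exact ⟨ha.1, le_trans ha.2 (le_of_lt h)⟩
  · intro hsub
    have := hsub (Finset.mem_filter.2 ⟨hy, le_refl y⟩)
    exact absurd (Finset.mem_filter.1 this).2 (by omega)

lemma le_of_rk_le {A : Finset ℕ} {x y : ℕ} (hx : x ∈ A) (h : rk A x ≤ rk A y) : x ≤ y := by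
  by_contra hc
  exact absurd h (by simpa using rk_strict hx (by omega))

lemma rk_injOn {A : Finset ℕ} {x y : ℕ} (hx : x ∈ A) (hy : y ∈ A) (h : rk A x = rk A y) :
    x = y :=
  le_antisymm (le_of_rk_le hx h.le) (le_of_rk_le hy h.ge)

lemma rk_sel {A : Finset ℕ} {i : ℕ} (h1 : 1 ≤ i) (h2 : i ≤ A.card) : rk A (sel A i) = i := by
  classical
  have key : A.filter (· ≤ sel A i) = ((A.sort (· ≤ ·)).take i).toFinset := by
    ext x
    simp only [Finset.mem_filter, List.mem_toFinset]
    constructor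
    · rintro ⟨hxA, hxle⟩
      have hxl : x ∈ A.sort (· ≤ ·) := (Finset.mem_sort _).2 hxA
      obtain ⟨j, hj, hget⟩ := List.getElem_of_mem hxl
      rw [List.mem_take_iff_getElem]
      by_cases hji : j < i
      · exact ⟨j, by simp [Finset.length_sort] at hj ⊢; omega, by simpa using hget⟩
      · exfalso
        have : sel A i < x := by
          have := sel_lt_sel h1 (show i < j + 1 by omega) (show j + 1 ≤ A.card by
            rw [Finset.length_sort] at hj; omega)
          have hx2 : sel A (j+1) = x := by
            rw [sel, List.getD_eq_getElem]
            · simpa using hget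
            · rw [Finset.length_sort]; simp; rw [Finset.length_sort] at hj; omega
          omega
        omega
    · rintro hx
      rw [List.mem_take_iff_getElem] at hx
      obtain ⟨j, hj, hget⟩ := hx
      have hjl : j < (A.sort (· ≤ ·)).length := by
        rw [Finset.length_sort]; simp at hj; omega
      constructor
      · rw [← hget]; exact (Finset.mem_sort _).1 (List.getElem_mem _)
      · have : sel A (j + 1) = x := by
          rw [sel, List.getD_eq_getElem _ _ (by simpa using hjl)]
          simpa using hget
        rcases eq_or_lt_of_le (show j + 1 ≤ i by simp at hj; omega) with he | hl
        · rw [← this, he]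
        · have := sel_lt_sel (show 1 ≤ j+1 by omega) hl h2
          omega
  rw [rk, key]
  rw [List.toFinset_card_of_nodup ((Finset.sort_nodup _ _).sublist (List.take_sublist _ _))]
  rw [List.length_take, Finset.length_sort]
  omega

lemma exists_sel {A : Finset ℕ} {x : ℕ} (hx : x ∈ A) :
    ∃ i, 1 ≤ i ∧ i ≤ A.card ∧ sel A i = x := by
  have hxl : x ∈ A.sort (· ≤ ·) := (Finset.mem_sort _).2 hx
  obtain ⟨j, hj, hget⟩ := List.getElem_of_mem hxl
  refine ⟨j + 1, by omega, by rw [Finset.length_sort] at hj; omega, ?_⟩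
  rw [sel, List.getD_eq_getElem _ _ (by simpa using hj)]
  simpa using hget

lemma sel_rk {A : Finset ℕ} {x : ℕ} (hx : x ∈ A) : sel A (rk A x) = x := by
  obtain ⟨i, h1, h2, hs⟩ := exists_sel hx
  have := rk_sel h1 h2 (A := A)
  rw [hs] at this
  rw [this, hs]

lemma sel_le_of_le_rk {A : Finset ℕ} {j x : ℕ} (h1 : 1 ≤ j) (h2 : j ≤ rk A x) :
    sel A j ≤ x := by
  by_contra hc
  push_neg at hc
  have hjc : j ≤ A.card := le_trans h2 rk_le_card
  have hsub : A.filter (· ≤ x) ⊆ (A.filter (· ≤ sel A j)).erase (sel A j) := by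
    intro a ha
    rw [Finset.mem_filter] at ha
    rw [Finset.mem_erase, Finset.mem_filter]
    exact ⟨by omega, ha.1, by omega⟩
  have hle := Finset.card_le_card hsub
  have hce : ((A.filter (fun x => x ≤ sel A j)).erase (sel A j)).card
      = (A.filter (fun x => x ≤ sel A j)).card - 1 :=
    Finset.card_erase_of_mem (Finset.mem_filter.2 ⟨sel_mem h1 hjc, le_refl _⟩)
  have hrr : rk A (sel A j) = j := rk_sel h1 hjc
  rw [rk] at h2 hrr
  rw [hce, hrr] at hle
  omega


attribute [local instance 0] Classical.propDecidable

/-- partial sums -/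
def gps (γ : List ℕ) (i : ℕ) : ℕ := (γ.take i).sum

/-- the full set of partial sums (1-based, up to length) -/
def Gam (γ : List ℕ) : Finset ℕ := (Finset.range γ.length).image (fun i => gps γ (i+1))

lemma gps_succ {γ : List ℕ} {i : ℕ} (h : i < γ.length) :
    gps γ (i + 1) = gps γ i + γ.get ⟨i, h⟩ := List.sum_take_succ _ _ _

lemma gps_mono {γ : List ℕ} {i j : ℕ} (h : i ≤ j) : gps γ i ≤ gps γ j := by
  induction j with
  | zero => rw [Nat.le_zero.1 h]
  | succ j ih =>
    rcases Nat.lt_or_ge j γ.length with hj | hj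
    · rcases Nat.eq_or_lt_of_le h with he | hl
      · rw [he]
      · exact le_trans (ih (by omega)) (by rw [gps_succ hj]; omega)
    · have : γ.take (j+1) = γ.take j := by
        rw [List.take_of_length_le hj, List.take_of_length_le (by omega)]
      rcases Nat.eq_or_lt_of_le h with he | hl
      · rw [he]
      · show gps γ i ≤ (γ.take (j+1)).sum
        rw [this]
        exact ih (by omega)

lemma gps_strict {γ : List ℕ} (hγ : IsComp γ) {i j : ℕ} (h : i < j) (hj : j ≤ γ.length) :
    gps γ i < gps γ j := by
  have h1 : gps γ i + 1 ≤ gps γ (i + 1) := by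
    rw [gps_succ (show i < γ.length by omega)]
    have := hγ (γ.get ⟨i, by omega⟩) (γ.get_mem _)
    omega
  exact lt_of_lt_of_le (by omega) (gps_mono (show i + 1 ≤ j by omega))

lemma gps_le_sum {γ : List ℕ} {i : ℕ} : gps γ i ≤ γ.sum := by
  conv_rhs => rw [← List.take_append_drop i γ]
  rw [List.sum_append]
  exact Nat.le_add_right _ _

lemma gps_injOn {γ : List ℕ} (hγ : IsComp γ) {a b : ℕ} (ha : a + 1 ≤ γ.length)
    (hb : b + 1 ≤ γ.length) (he : gps γ (a+1) = gps γ (b+1)) : a = b := by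
  by_contra hc
  rcases Nat.lt_or_ge a b with hl | hl
  · exact absurd he (Nat.ne_of_lt (gps_strict hγ (by omega) hb))
  · exact absurd he.symm (Nat.ne_of_lt (gps_strict hγ (by omega) ha))

lemma mem_Gam {γ : List ℕ} {x : ℕ} :
    x ∈ Gam γ ↔ ∃ i, 1 ≤ i ∧ i ≤ γ.length ∧ gps γ i = x := by
  constructor
  · intro hx
    rw [Gam, Finset.mem_image] at hx
    obtain ⟨j, hj, he⟩ := hx
    rw [Finset.mem_range] at hj
    exact ⟨j + 1, by omega, by omega, he⟩
  · rintro ⟨i, h1, h2, he⟩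
    rw [Gam, Finset.mem_image]
    exact ⟨i - 1, Finset.mem_range.2 (by omega), by rw [show i - 1 + 1 = i by omega]; exact he⟩

lemma rk_Gam {γ : List ℕ} (hγ : IsComp γ) {i : ℕ} (h1 : 1 ≤ i) (h2 : i ≤ γ.length) :
    rk (Gam γ) (gps γ i) = i := by
  have key : (Gam γ).filter (· ≤ gps γ i) = (Finset.range i).image (fun j => gps γ (j+1)) := by
    ext x
    rw [Finset.mem_filter, Finset.mem_image]
    constructor
    · rintro ⟨hx, hle⟩
      obtain ⟨j, hj1, hj2, hje⟩ := mem_Gam.1 hx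
      refine ⟨j - 1, Finset.mem_range.2 ?_, by rw [show j - 1 + 1 = j by omega]; exact hje⟩
      by_contra hc
      have : i < j := by omega
      have := gps_strict hγ this hj2
      omega
    · rintro ⟨j, hj, hje⟩
      rw [Finset.mem_range] at hj
      refine ⟨mem_Gam.2 ⟨j + 1, by omega, by omega, hje⟩, ?_⟩
      rw [← hje]
      exact gps_mono (by omega)
  rw [rk, key, Finset.card_image_of_injOn, Finset.card_range]
  intro a ha b hb he
  rw [Finset.mem_coe, Finset.mem_range] at ha hb
  exact gps_injOn hγ (by omega) (by omega) he

lemma card_Gam {γ : List ℕ} (hγ : IsComp γ) : (Gam γ).card = γ.length := by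
  rw [Gam, Finset.card_image_of_injOn, Finset.card_range]
  intro a ha b hb he
  rw [Finset.mem_coe, Finset.mem_range] at ha hb
  exact gps_injOn hγ (by omega) (by omega) he

/-- the canonical "marked" subset of `C` corresponding to composition `γ`. -/
def Wof (γ : List ℕ) (C : Finset ℕ) : Finset ℕ := C.filter (fun t => rk C t ∈ Gam γ)

lemma Wof_subset {γ : List ℕ} {C : Finset ℕ} : Wof γ C ⊆ C := Finset.filter_subset _ _

lemma image_rk_Wof {γ : List ℕ} {C : Finset ℕ} (hγ : IsComp γ) (hcard : C.card = γ.sum) :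
    (Wof γ C).image (rk C) = Gam γ := by
  ext x
  rw [Finset.mem_image]
  constructor
  · rintro ⟨t, ht, he⟩
    rw [Wof, Finset.mem_filter] at ht
    rw [← he]; exact ht.2
  · intro hx
    obtain ⟨i, h1, h2, he⟩ := mem_Gam.1 hx
    have hx1 : 1 ≤ x := by
      have := gps_strict hγ (show 0 < i by omega) h2
      rw [he] at this; rw [gps] at this; simp at this; omega
    have hx2 : x ≤ C.card := by rw [hcard, ← he]; exact gps_le_sum
    refine ⟨sel C x, ?_, rk_sel hx1 hx2⟩
    rw [Wof, Finset.mem_filter]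
    exact ⟨sel_mem hx1 hx2, by rw [rk_sel hx1 hx2]; exact hx⟩

lemma card_Wof {γ : List ℕ} {C : Finset ℕ} (hγ : IsComp γ) (hcard : C.card = γ.sum) :
    (Wof γ C).card = γ.length := by
  rw [← card_Gam hγ, ← image_rk_Wof hγ hcard]
  rw [Finset.card_image_of_injOn]
  intro a ha b hb he
  exact rk_injOn (Wof_subset ha) (Wof_subset hb) he


lemma runEnd {N : ℕ} {C W : Finset ℕ} (hC : C ⊆ Finset.Icc 1 N)
    (Hrun : ∀ b ∈ C, b + 1 ∉ C → b ∈ W) :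
    ∀ a ∈ C, ∃ b ∈ W, a ≤ b ∧ Finset.Icc a b ⊆ C := by
  have main : ∀ d a, a ∈ C → N - a ≤ d → ∃ b ∈ W, a ≤ b ∧ Finset.Icc a b ⊆ C := by
    intro d
    induction d with
    | zero =>
      intro a ha hd
      have haN : a ≤ N := (Finset.mem_Icc.1 (hC ha)).2
      have hnot : a + 1 ∉ C := by
        intro hmem
        have := (Finset.mem_Icc.1 (hC hmem)).2
        omega
      refine ⟨a, Hrun a ha hnot, le_refl a, ?_⟩
      intro x hx
      rw [Finset.mem_Icc] at hx
      have : x = a := by omega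
      rw [this]; exact ha
    | succ d ih =>
      intro a ha hd
      by_cases hmem : a + 1 ∈ C
      · have haN : a + 1 ≤ N := (Finset.mem_Icc.1 (hC hmem)).2
        obtain ⟨b, hbW, hab, hIcc⟩ := ih (a + 1) hmem (by omega)
        refine ⟨b, hbW, by omega, ?_⟩
        intro x hx
        rw [Finset.mem_Icc] at hx
        rcases Nat.eq_or_lt_of_le hx.1 with he | hl
        · rw [← he]; exact ha
        · exact hIcc (Finset.mem_Icc.2 ⟨by omega, hx.2⟩)
      · refine ⟨a, Hrun a ha hmem, le_refl a, ?_⟩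
        intro x hx
        rw [Finset.mem_Icc] at hx
        have : x = a := by omega
        rw [this]; exact ha
  exact fun a ha => main (N - a) a ha (le_refl _)

lemma rk_count_mem {C : Finset ℕ} {γ : List ℕ}
    (hγ : IsComp γ) (hcard : C.card = γ.sum)
    {s : ℕ} (hs : s ∈ Wof γ C) : rk C s = gps γ (rk (Wof γ C) s) := by
  set W := Wof γ C with hW
  have hsC : s ∈ C := Wof_subset hs
  have hsG : rk C s ∈ Gam γ := (Finset.mem_filter.1 hs).2
  have key : (W.filter (· ≤ s)).image (rk C) = (Gam γ).filter (· ≤ rk C s) := by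
    ext x
    rw [Finset.mem_image, Finset.mem_filter]
    constructor
    · rintro ⟨t, ht, he⟩
      rw [Finset.mem_filter] at ht
      have htG : rk C t ∈ Gam γ := (Finset.mem_filter.1 ht.1).2
      exact ⟨by rw [← he]; exact htG, by rw [← he]; exact rk_mono ht.2⟩
    · rintro ⟨hx, hxle⟩
      have : x ∈ W.image (rk C) := by rw [hW, image_rk_Wof hγ hcard]; exact hx
      obtain ⟨t, ht, he⟩ := Finset.mem_image.1 this
      refine ⟨t, Finset.mem_filter.2 ⟨ht, ?_⟩, he⟩
      exact le_of_rk_le (Wof_subset ht) (by rw [he]; exact hxle)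
  have hcards : rk W s = rk (Gam γ) (rk C s) := by
    rw [rk, rk, ← key, Finset.card_image_of_injOn]
    intro a ha b hb he
    have haW := Finset.mem_coe.1 ha
    have hbW := Finset.mem_coe.1 hb
    exact rk_injOn (Wof_subset (Finset.mem_filter.1 haW).1)
      (Wof_subset (Finset.mem_filter.1 hbW).1) he
  obtain ⟨i, h1, h2, he⟩ := mem_Gam.1 hsG
  rw [hcards, ← he, rk_Gam hγ h1 h2, he]

lemma rk_count {N : ℕ} {C : Finset ℕ} {γ : List ℕ} (hC : C ⊆ Finset.Icc 1 N)
    (hγ : IsComp γ) (hcard : C.card = γ.sum)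
    (Hrun : ∀ b ∈ C, b + 1 ∉ C → b ∈ Wof γ C)
    {s : ℕ} (hs : s ∈ Wof γ C ∨ s ∉ C) : rk C s = gps γ (rk (Wof γ C) s) := by
  rcases hs with hs | hs
  · exact rk_count_mem hγ hcard hs
  · set W := Wof γ C with hW
    set i := rk W s with hi
    rcases Nat.eq_zero_or_pos i with h0 | hpos
    · rw [h0]
      have : C.filter (· ≤ s) = ∅ := by
        rw [Finset.eq_empty_iff_forall_notMem]
        intro a hmem
        rw [Finset.mem_filter] at hmem
        obtain ⟨b, hbW, hab, hIcc⟩ := runEnd hC Hrun a hmem.1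
        by_cases hbs : b ≤ s
        · have hb1 : b ∈ W.filter (· ≤ s) := Finset.mem_filter.2 ⟨hbW, hbs⟩
          have hp : 1 ≤ rk W s := Finset.card_pos.2 ⟨b, hb1⟩
          omega
        · exact hs (hIcc (Finset.mem_Icc.2 ⟨hmem.2, by omega⟩))
      rw [rk, this, Finset.card_empty, gps]
      simp
    · have hicard : i ≤ W.card := rk_le_card
      have htW : sel W i ∈ W := sel_mem hpos hicard
      set t := sel W i with ht
      have hts : t ≤ s := sel_le_of_le_rk hpos (le_refl i)
      have heq : rk C s = rk C t := by
        apply le_antisymm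
        · apply Finset.card_le_card
          intro a hmem
          rw [Finset.mem_filter] at hmem ⊢
          obtain ⟨b, hbW, hab, hIcc⟩ := runEnd hC Hrun a hmem.1
          by_cases hbs : b ≤ s
          · have hrkb : rk W b ≤ i := by rw [hi]; exact rk_mono hbs
            have : b ≤ t := le_of_rk_le hbW (by rw [rk_sel hpos hicard]; exact hrkb)
            exact ⟨hmem.1, by omega⟩
          · exact absurd (hIcc (Finset.mem_Icc.2 ⟨hmem.2, by omega⟩)) hs
        · exact rk_mono hts
      rw [heq, rk_count_mem hγ hcard htW]
      congr 1
      rw [← hW, ht, rk_sel hpos hicard]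

lemma rk_image_rk {S W : Finset ℕ} (hW : W ⊆ S) {s : ℕ} (hs : s ∈ S) :
    rk (W.image (rk S)) (rk S s) = rk W s := by
  have key : (W.image (rk S)).filter (· ≤ rk S s) = (W.filter (· ≤ s)).image (rk S) := by
    ext x
    simp only [Finset.mem_filter, Finset.mem_image]
    constructor
    · rintro ⟨⟨t, htW, he⟩, hxle⟩
      refine ⟨t, ⟨htW, ?_⟩, he⟩
      exact le_of_rk_le (hW htW) (by rw [he]; exact hxle)
    · rintro ⟨t, ⟨ht1, ht2⟩, he⟩
      exact ⟨⟨t, ht1, he⟩, by rw [← he]; exact rk_mono ht2⟩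
  have hinj : Set.InjOn (rk S) (W.filter (· ≤ s)) := by
    intro a ha b hb he
    exact rk_injOn (hW (Finset.mem_filter.1 (Finset.mem_coe.1 ha)).1)
      (hW (Finset.mem_filter.1 (Finset.mem_coe.1 hb)).1) he
  show ((W.image (rk S)).filter (· ≤ rk S s)).card = rk W s
  rw [key, Finset.card_image_of_injOn hinj]
  rfl

lemma rk_Icc {N s : ℕ} (h2 : s ≤ N) : rk (Finset.Icc 1 N) s = s := by
  have : (Finset.Icc 1 N).filter (· ≤ s) = Finset.Icc 1 s := by
    ext x
    rw [Finset.mem_filter, Finset.mem_Icc, Finset.mem_Icc]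
    omega
  rw [rk, this, Nat.card_Icc]
  omega

lemma rk_compl {N : ℕ} {A : Finset ℕ} (hA : A ⊆ Finset.Icc 1 N) {s : ℕ}
    (h2 : s ≤ N) : rk A s + rk (Finset.Icc 1 N \ A) s = s := by
  have key : (Finset.Icc 1 N \ A).filter (· ≤ s)
      = (Finset.Icc 1 N).filter (· ≤ s) \ A.filter (· ≤ s) := by
    ext x
    rw [Finset.mem_filter, Finset.mem_sdiff, Finset.mem_sdiff,
      Finset.mem_filter, Finset.mem_filter]
    tauto
  have hsub : A.filter (· ≤ s) ⊆ (Finset.Icc 1 N).filter (· ≤ s) := by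
    intro x hx
    rw [Finset.mem_filter] at hx ⊢
    exact ⟨hA hx.1, hx.2⟩
  have h3 : rk A s ≤ rk (Finset.Icc 1 N) s := Finset.card_le_card hsub
  have h4 : rk (Finset.Icc 1 N \ A) s
      = ((Finset.Icc 1 N).filter (· ≤ s)).card - (A.filter (· ≤ s)).card := by
    show ((Finset.Icc 1 N \ A).filter (· ≤ s)).card = _
    rw [key, Finset.card_sdiff_of_subset hsub]
  have h5 : rk (Finset.Icc 1 N) s = s := rk_Icc h2
  have h6 : ((Finset.Icc 1 N).filter (· ≤ s)).card = s := h5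
  have h7 : (A.filter (· ≤ s)).card = rk A s := rfl
  omega

lemma rk_union_disj {T U : Finset ℕ} (h : Disjoint T U) {s : ℕ} :
    rk (T ∪ U) s = rk T s + rk U s := by
  show ((T ∪ U).filter (· ≤ s)).card = rk T s + rk U s
  rw [Finset.filter_union,
    Finset.card_union_of_disjoint (Finset.disjoint_filter_filter h)]
  rfl

/- ===== application layer ===== -/

def mx (C : Finset ℕ) : ℕ := C.max.unbotD 0

lemma mx_mem {C : Finset ℕ} (h : C.Nonempty) : mx C ∈ C := by
  rw [mx, ← Finset.coe_max' h, WithBot.unbotD_coe]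
  exact Finset.max'_mem _ _

lemma le_mx {C : Finset ℕ} {x : ℕ} (h : x ∈ C) : x ≤ mx C := by
  rw [mx, ← Finset.coe_max' ⟨x, h⟩, WithBot.unbotD_coe]
  exact Finset.le_max' _ _ h

lemma rk_mx {C : Finset ℕ} (h : C.Nonempty) : rk C (mx C) = C.card := by
  rw [rk, Finset.filter_true_of_mem (fun x hx => le_mx hx)]

lemma mx_eq_top {C : Finset ℕ} {N : ℕ} (hC : C ⊆ Finset.Icc 1 N) (h : N ∈ C) :
    mx C = N :=
  le_antisymm (Finset.mem_Icc.1 (hC (mx_mem ⟨N, h⟩))).2 (le_mx h)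

lemma sum_pos {γ : List ℕ} (hγ : IsComp γ) (h : γ ≠ []) : 1 ≤ γ.sum := by
  have h1 : 1 ≤ γ.length := by
    cases γ with
    | nil => exact absurd rfl h
    | cons a l => simp
  have := gps_strict hγ (show 0 < 1 by omega) h1
  have h2 : gps γ 1 ≤ γ.sum := gps_le_sum
  rw [gps] at this
  simp at this
  omega

lemma setComp_mem {γ : List ℕ} (hγ : IsComp γ) {x : ℕ} (h : x ∈ setComp γ) :
    1 ≤ x ∧ x < γ.sum := by
  rw [setComp, Finset.mem_image] at h
  obtain ⟨j, hj, he⟩ := h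
  rw [Finset.mem_range] at hj
  have h1 : gps γ 0 < gps γ (j + 1) := gps_strict hγ (by omega) (by omega)
  have h2 : gps γ (j + 1) < gps γ γ.length := gps_strict hγ (by omega) (le_refl _)
  have h0 : gps γ 0 = 0 := by simp [gps]
  have h3 : gps γ γ.length = γ.sum := by rw [gps, List.take_length]
  have he' : gps γ (j + 1) = x := he
  omega

lemma Gam_eq_insert {γ : List ℕ} (h : γ ≠ []) :
    Gam γ = insert γ.sum (setComp γ) := by
  have hl : 1 ≤ γ.length := by
    cases γ with
    | nil => exact absurd rfl h
    | cons a l => simp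
  ext x
  rw [Finset.mem_insert, mem_Gam, setComp, Finset.mem_image]
  constructor
  · rintro ⟨i, h1, h2, he⟩
    rcases Nat.eq_or_lt_of_le h2 with heq | hlt
    · left; rw [← he, heq, gps, List.take_length]
    · right
      exact ⟨i - 1, Finset.mem_range.2 (by omega), by rw [show i - 1 + 1 = i by omega]; exact he⟩
  · rintro (he | ⟨j, hj, he⟩)
    · exact ⟨γ.length, hl, le_refl _, by rw [gps, List.take_length, he]⟩
    · rw [Finset.mem_range] at hj
      exact ⟨j + 1, by omega, by omega, he⟩

lemma embed_eq_filter {C D : Finset ℕ} (hD : ∀ x ∈ D, 1 ≤ x ∧ x ≤ C.card) :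
    embedIn C D = C.filter (fun t => rk C t ∈ D) := by
  ext x
  rw [embedIn, Finset.mem_image, Finset.mem_filter]
  constructor
  · rintro ⟨u, hu, he⟩
    have hb := hD u hu
    have hsel : sel C u = x := he
    have hmem := sel_mem hb.1 hb.2 (A := C)
    rw [hsel] at hmem
    refine ⟨hmem, ?_⟩
    have := rk_sel hb.1 hb.2 (A := C)
    rw [hsel] at this
    rw [this]; exact hu
  · rintro ⟨hx, hrk⟩
    exact ⟨rk C x, hrk, sel_rk hx⟩

section Main

variable {α β : List ℕ} {A : Finset ℕ}

/-- the T-side marked set identification. -/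
lemma T_ident (hβ : IsComp β) (hn : β ≠ []) (hA2 : A.card = β.sum) :
    Wof β A = insert (mx A) (embedIn A (setComp β)) := by
  have hne : A.Nonempty := Finset.card_pos.1 (by rw [hA2]; exact sum_pos hβ hn)
  have hJ : ∀ x ∈ setComp β, 1 ≤ x ∧ x ≤ A.card := by
    intro x hx
    have := setComp_mem hβ hx
    omega
  rw [Wof, Gam_eq_insert hn, embed_eq_filter hJ]
  ext x
  simp only [Finset.mem_filter, Finset.mem_insert]
  constructor
  · rintro ⟨hx, (he | hs)⟩
    · left
      apply rk_injOn hx (mx_mem hne)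
      rw [he, rk_mx hne, hA2]
    · right; exact ⟨hx, hs⟩
  · rintro (he | ⟨hx, hs⟩)
    · rw [he]
      exact ⟨mx_mem hne, by rw [rk_mx hne, hA2]; left; rfl⟩
    · exact ⟨hx, Or.inr hs⟩

end Main

section Main2

variable {α β : List ℕ} {A : Finset ℕ}

lemma coSet_subset {N : ℕ} : coSet N A ⊆ Finset.Icc 1 N := Finset.sdiff_subset

lemma coSet_card {N : ℕ} (hA1 : A ⊆ Finset.Icc 1 N) :
    (coSet N A).card = N - A.card := by
  rw [coSet, Finset.card_sdiff_of_subset hA1, Nat.card_Icc]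
  omega

lemma not_mem_of_mem_coSet {N x : ℕ} (h : x ∈ coSet N A) : x ∉ A :=
  (Finset.mem_sdiff.1 h).2

lemma disjA {N : ℕ} : Disjoint A (coSet N A) := Finset.disjoint_sdiff

lemma NzA_cases (hα : IsComp α) (hβ : IsComp β) (hm : α ≠ []) (hn : β ≠ [])
    (hA1 : A ⊆ Finset.Icc 1 (α.sum + β.sum)) (hA2 : A.card = β.sum) :
    (α.sum + β.sum ∈ A ∧ mx A = α.sum + β.sum
       ∧ zA (α.sum + β.sum) A = mx (coSet (α.sum + β.sum) A)) ∨
    (α.sum + β.sum ∉ A ∧ mx (coSet (α.sum + β.sum) A) = α.sum + β.sum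
       ∧ zA (α.sum + β.sum) A = mx A) := by
  set N := α.sum + β.sum with hN
  by_cases h : N ∈ A
  · exact Or.inl ⟨h, mx_eq_top hA1 h, by rw [zA, if_pos h, mx]⟩
  · have hNIcc : N ∈ Finset.Icc 1 N := by
      rw [Finset.mem_Icc]
      have := sum_pos hβ hn
      omega
    have hNc : N ∈ coSet N A := Finset.mem_sdiff.2 ⟨hNIcc, h⟩
    exact Or.inr ⟨h, mx_eq_top coSet_subset hNc, by rw [zA, if_neg h, mx]⟩

lemma A_nonempty (hβ : IsComp β) (hn : β ≠ []) (hA2 : A.card = β.sum) : A.Nonempty :=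
  Finset.card_pos.1 (by rw [hA2]; exact sum_pos hβ hn)

lemma Ac_nonempty (hα : IsComp α) (hm : α ≠ [])
    (hA1 : A ⊆ Finset.Icc 1 (α.sum + β.sum)) (hA2 : A.card = β.sum) :
    (coSet (α.sum + β.sum) A).Nonempty :=
  Finset.card_pos.1 (by
    rw [coSet_card hA1, hA2]
    have := sum_pos hα hm
    omega)

lemma Ac_card (hA1 : A ⊆ Finset.Icc 1 (α.sum + β.sum)) (hA2 : A.card = β.sum) :
    (coSet (α.sum + β.sum) A).card = α.sum := by
  rw [coSet_card hA1, hA2]; omega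

lemma U_ident (hα : IsComp α) (hm : α ≠ [])
    (hA1 : A ⊆ Finset.Icc 1 (α.sum + β.sum)) (hA2 : A.card = β.sum) :
    Wof α (coSet (α.sum + β.sum) A)
      = insert (mx (coSet (α.sum + β.sum) A))
          (embedIn (coSet (α.sum + β.sum) A) (setComp α)) :=
  T_ident hα hm (Ac_card hA1 hA2)

lemma embedJ_sub (hβ : IsComp β) (hA2 : A.card = β.sum) :
    embedIn A (setComp β) ⊆ A := by
  rw [embed_eq_filter (fun x hx => by have := setComp_mem hβ hx; omega)]
  exact Finset.filter_subset _ _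

lemma embedJ_sub_T (hβ : IsComp β) (hn : β ≠ []) (hA2 : A.card = β.sum) :
    embedIn A (setComp β) ⊆ Wof β A := by
  rw [T_ident hβ hn hA2]
  exact Finset.subset_insert _ _

lemma Jtilde_eq (hα : IsComp α) (hβ : IsComp β) (hm : α ≠ []) (hn : β ≠ [])
    (hA1 : A ⊆ Finset.Icc 1 (α.sum + β.sum)) (hA2 : A.card = β.sum) :
    Jtilde (α.sum + β.sum) A (setComp β) = Wof β A := by
  rw [T_ident hβ hn hA2, Jtilde]
  rcases NzA_cases hα hβ hm hn hA1 hA2 with ⟨h1, h2, h3⟩ | ⟨h1, h2, h3⟩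
  · rw [if_pos h1, h2]
  · rw [if_neg h1, h3]

lemma S_ident (hα : IsComp α) (hβ : IsComp β) (hm : α ≠ []) (hn : β ≠ [])
    (hA1 : A ⊆ Finset.Icc 1 (α.sum + β.sum)) (hA2 : A.card = β.sum) :
    insert (α.sum + β.sum) (insert (zA (α.sum + β.sum) A)
        (hashAJ (α.sum + β.sum) A (setComp α) (setComp β)))
      = Wof β A ∪ Wof α (coSet (α.sum + β.sum) A) := by
  rw [T_ident hβ hn hA2, U_ident hα hm hA1 hA2, hashAJ]
  rcases NzA_cases hα hβ hm hn hA1 hA2 with ⟨h1, h2, h3⟩ | ⟨h1, h2, h3⟩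
  · rw [h3]
    ext x
    simp only [Finset.mem_insert, Finset.mem_union, h2]
    tauto
  · rw [h3]
    ext x
    simp only [Finset.mem_insert, Finset.mem_union, h2]
    tauto

lemma HrunA (hα : IsComp α) (hβ : IsComp β) (hm : α ≠ []) (hn : β ≠ [])
    (hA1 : A ⊆ Finset.Icc 1 (α.sum + β.sum)) (hA2 : A.card = β.sum)
    (hA3 : ebar (α.sum + β.sum) A \ {zA (α.sum + β.sum) A}
      ⊆ hashAJ (α.sum + β.sum) A (setComp α) (setComp β)) :
    ∀ b ∈ A, b + 1 ∉ A → b ∈ Wof β A := by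
  set N := α.sum + β.sum with hN
  intro b hb hb1
  have hAcne := Ac_nonempty hα hm hA1 hA2
  by_cases hbN : b = N
  · have hNA : N ∈ A := hbN ▸ hb
    rw [T_ident hβ hn hA2]
    exact Finset.mem_insert.2 (Or.inl (hbN.trans (mx_eq_top hA1 hNA).symm))
  · have hbe : b ∈ ebar N A :=
      Finset.mem_union_left _ (Finset.mem_erase.2 ⟨hbN, Finset.mem_filter.2 ⟨hb, hb1⟩⟩)
    by_cases hbz : b = zA N A
    · rcases NzA_cases hα hβ hm hn hA1 hA2 with ⟨h1, h2, h3⟩ | ⟨h1, h2, h3⟩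
      · exfalso
        have : b ∈ coSet N A := by rw [hbz, h3]; exact mx_mem hAcne
        exact not_mem_of_mem_coSet this hb
      · rw [T_ident hβ hn hA2]
        exact Finset.mem_insert.2 (Or.inl (hbz.trans h3))
    · have hmem := hA3 (Finset.mem_sdiff.2 ⟨hbe, by simp [hbz]⟩)
      rw [hashAJ, Finset.mem_union] at hmem
      rcases hmem with hI | hJ
      · exfalso
        have hsub : embedIn (coSet N A) (setComp α) ⊆ coSet N A := by
          rw [embed_eq_filter (fun x hx => by
            have h5 := setComp_mem hα hx
            have h6 : (coSet N A).card = α.sum := by rw [hN]; exact Ac_card hA1 hA2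
            omega)]
          exact Finset.filter_subset _ _
        exact not_mem_of_mem_coSet (hsub hI) hb
      · exact embedJ_sub_T hβ hn hA2 hJ

lemma HrunC (hα : IsComp α) (hβ : IsComp β) (hm : α ≠ []) (hn : β ≠ [])
    (hA1 : A ⊆ Finset.Icc 1 (α.sum + β.sum)) (hA2 : A.card = β.sum)
    (hA3 : ebar (α.sum + β.sum) A \ {zA (α.sum + β.sum) A}
      ⊆ hashAJ (α.sum + β.sum) A (setComp α) (setComp β)) :
    ∀ b ∈ coSet (α.sum + β.sum) A, b + 1 ∉ coSet (α.sum + β.sum) A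
      → b ∈ Wof α (coSet (α.sum + β.sum) A) := by
  set N := α.sum + β.sum with hN
  intro b hb hb1
  have hAne := A_nonempty hβ hn hA2
  by_cases hbN : b = N
  · have hNc : N ∈ coSet N A := hbN ▸ hb
    rw [U_ident hα hm hA1 hA2]
    exact Finset.mem_insert.2 (Or.inl (hbN.trans (mx_eq_top coSet_subset hNc).symm))
  · have hbe : b ∈ ebar N A :=
      Finset.mem_union_right _ (Finset.mem_erase.2 ⟨hbN, Finset.mem_filter.2 ⟨hb, hb1⟩⟩)
    by_cases hbz : b = zA N A
    · rcases NzA_cases hα hβ hm hn hA1 hA2 with ⟨h1, h2, h3⟩ | ⟨h1, h2, h3⟩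
      · rw [U_ident hα hm hA1 hA2]
        exact Finset.mem_insert.2 (Or.inl (hbz.trans h3))
      · exfalso
        have : b ∈ A := by rw [hbz, h3]; exact mx_mem hAne
        exact not_mem_of_mem_coSet hb this
    · have hmem := hA3 (Finset.mem_sdiff.2 ⟨hbe, by simp [hbz]⟩)
      rw [hashAJ, Finset.mem_union] at hmem
      rcases hmem with hI | hJ
      · rw [U_ident hα hm hA1 hA2]
        apply Finset.mem_insert_of_mem
        exact hI
      · exact absurd (embedJ_sub hβ hA2 hJ) (not_mem_of_mem_coSet hb)

end Main2

def Gfun (α β : List ℕ) (P : Finset ℕ) (j : ℕ) : ℕ :=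
  gps β (rk P j) + gps α (j - rk P j)

def nxt (S : Finset ℕ) (p : ℕ) : ℕ :=
  if h : (S.filter (fun s => p ≤ s)).Nonempty then (S.filter (fun s => p ≤ s)).min' h
  else 0

def reconS (α β : List ℕ) (P : Finset ℕ) : Finset ℕ :=
  (Finset.Icc 1 (α.length + β.length)).image (Gfun α β P)

def reconT (α β : List ℕ) (P : Finset ℕ) : Finset ℕ :=
  (reconS α β P).filter (fun s => rk (reconS α β P) s ∈ P)

def recon (α β : List ℕ) (P : Finset ℕ) : Finset ℕ :=
  (Finset.Icc 1 (α.sum + β.sum)).filter (fun p => nxt (reconS α β P) p ∈ reconT α β P)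

lemma master {α β : List ℕ} {A : Finset ℕ} (hα : IsComp α) (hβ : IsComp β)
    (hm : α ≠ []) (hn : β ≠ [])
    (hA1 : A ⊆ Finset.Icc 1 (α.sum + β.sum)) (hA2 : A.card = β.sum)
    (hA3 : ebar (α.sum + β.sum) A \ {zA (α.sum + β.sum) A}
      ⊆ hashAJ (α.sum + β.sum) A (setComp α) (setComp β)) :
    A = recon α β (Psi α.sum β.sum (setComp α) (setComp β) A) := by
  set N := α.sum + β.sum with hN
  set Ac := coSet N A with hAc
  set T := Wof β A with hT
  set U := Wof α Ac with hU
  set S := T ∪ U with hS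
  have hAcc : Ac.card = α.sum := Ac_card hA1 hA2
  have hTsub : T ⊆ S := Finset.subset_union_left
  have hUsub : U ⊆ S := Finset.subset_union_right
  have hTA : T ⊆ A := Wof_subset
  have hUA : U ⊆ Ac := Wof_subset
  have hdisj : Disjoint T U := Disjoint.mono hTA hUA disjA
  have hSsub : S ⊆ Finset.Icc 1 N := by
    rw [hS]
    intro x hx
    rcases Finset.mem_union.1 hx with h | h
    · exact hA1 (hTA h)
    · exact coSet_subset (hUA h)
  have hSid : insert N (insert (zA N A) (hashAJ N A (setComp α) (setComp β))) = S :=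
    S_ident hα hβ hm hn hA1 hA2
  have hPsi : Psi α.sum β.sum (setComp α) (setComp β) A = T.image (rk S) := by
    rw [Psi, ← hN, hSid, Jtilde_eq hα hβ hm hn hA1 hA2, stdSet, ← hT]
    rfl
  set P := T.image (rk S) with hP
  have hTcard : T.card = β.length := card_Wof hβ hA2
  have hUcard : U.card = α.length := card_Wof hα hAcc
  have hScard : S.card = α.length + β.length := by
    rw [hS, Finset.card_union_of_disjoint hdisj, hTcard, hUcard]
    omega
  have hrunA := HrunA hα hβ hm hn hA1 hA2 hA3
  have hrunC := HrunC hα hβ hm hn hA1 hA2 hA3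
  have hmain : ∀ s ∈ S, s = Gfun α β P (rk S s) := by
    intro s hs
    have hsIcc : s ∈ Finset.Icc 1 N := hSsub hs
    have hcond1 : s ∈ Wof β A ∨ s ∉ A := by
      rcases Finset.mem_union.1 hs with h | h
      · exact Or.inl h
      · exact Or.inr (not_mem_of_mem_coSet (hUA h))
    have hcond2 : s ∈ Wof α Ac ∨ s ∉ Ac := by
      rcases Finset.mem_union.1 hs with h | h
      · exact Or.inr (fun hc => not_mem_of_mem_coSet hc (hTA h))
      · exact Or.inl h
    have h1 : rk A s = gps β (rk T s) := rk_count hA1 hβ hA2 hrunA hcond1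
    have h2 : rk Ac s = gps α (rk U s) := rk_count coSet_subset hα hAcc hrunC hcond2
    have h3 : rk A s + rk Ac s = s := by
      rw [hAc, hN]
      exact rk_compl hA1 (by rw [Finset.mem_Icc] at hsIcc; omega)
    have h4 : rk S s = rk T s + rk U s := rk_union_disj hdisj
    have h5 : rk P (rk S s) = rk T s := rk_image_rk hTsub hs
    rw [Gfun, h5]
    have h6 : rk S s - rk T s = rk U s := by omega
    rw [h6, ← h1, ← h2]
    omega
  have hSrec : reconS α β P = S := by
    rw [reconS]
    ext x
    rw [Finset.mem_image]
    constructor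
    · rintro ⟨j, hj, he⟩
      rw [Finset.mem_Icc] at hj
      have hsel : sel S j ∈ S := sel_mem hj.1 (by omega)
      have hrk : rk S (sel S j) = j := rk_sel hj.1 (by omega)
      have := hmain (sel S j) hsel
      rw [hrk] at this
      rw [← he, ← this]
      exact hsel
    · intro hx
      refine ⟨rk S x, Finset.mem_Icc.2 ⟨rk_pos hx, by rw [← hScard]; exact rk_le_card⟩, ?_⟩
      exact (hmain x hx).symm
  have hTrec : reconT α β P = T := by
    rw [reconT, hSrec]
    ext x
    rw [Finset.mem_filter]
    constructor
    · rintro ⟨hxS, hxP⟩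
      obtain ⟨t, htT, he⟩ := Finset.mem_image.1 hxP
      have : t = x := rk_injOn (hTsub htT) hxS he
      rw [← this]; exact htT
    · intro hxT
      exact ⟨hTsub hxT, Finset.mem_image.2 ⟨x, hxT, rfl⟩⟩
  rw [recon, hPsi, hTrec, hSrec, ← hN]
  have hNS : N ∈ S := by
    rcases NzA_cases hα hβ hm hn hA1 hA2 with ⟨h1, h2, h3⟩ | ⟨h1, h2, h3⟩
    · apply hTsub
      rw [hT, T_ident hβ hn hA2]
      exact Finset.mem_insert.2 (Or.inl h2.symm)
    · apply hUsub
      rw [hU, U_ident hα hm hA1 hA2, ← hAc]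
      exact Finset.mem_insert.2 (Or.inl h2.symm)
  ext p
  rw [Finset.mem_filter]
  constructor
  · intro hp
    have hpIcc : p ∈ Finset.Icc 1 N := hA1 hp
    have hpN : p ≤ N := (Finset.mem_Icc.1 hpIcc).2
    have hFne : (S.filter (fun s => p ≤ s)).Nonempty :=
      ⟨N, Finset.mem_filter.2 ⟨hNS, hpN⟩⟩
    have hnxt : nxt S p = (S.filter (fun s => p ≤ s)).min' hFne := dif_pos hFne
    have hnxtmem := Finset.mem_filter.1 (Finset.min'_mem _ hFne)
    obtain ⟨b, hbT, hpb, hIcc⟩ := runEnd hA1 hrunA p hp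
    have hnb : nxt S p ≤ b := by
      rw [hnxt]
      exact Finset.min'_le _ _ (Finset.mem_filter.2 ⟨hTsub hbT, hpb⟩)
    have hnA : nxt S p ∈ A := by
      apply hIcc
      rw [Finset.mem_Icc]
      exact ⟨by rw [hnxt]; exact hnxtmem.2, hnb⟩
    refine ⟨hpIcc, ?_⟩
    have hnS : nxt S p ∈ S := by rw [hnxt]; exact hnxtmem.1
    rcases Finset.mem_union.1 hnS with h | h
    · exact h
    · exact absurd hnA (not_mem_of_mem_coSet (hUA h))
  · rintro ⟨hpIcc, hnT⟩
    by_contra hpA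
    have hpAc : p ∈ Ac := Finset.mem_sdiff.2 ⟨hpIcc, hpA⟩
    have hpN : p ≤ N := (Finset.mem_Icc.1 hpIcc).2
    have hFne : (S.filter (fun s => p ≤ s)).Nonempty :=
      ⟨N, Finset.mem_filter.2 ⟨hNS, hpN⟩⟩
    have hnxt : nxt S p = (S.filter (fun s => p ≤ s)).min' hFne := dif_pos hFne
    have hnxtmem := Finset.mem_filter.1 (Finset.min'_mem _ hFne)
    obtain ⟨b, hbU, hpb, hIcc⟩ := runEnd coSet_subset hrunC p hpAc
    have hnb : nxt S p ≤ b := by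
      rw [hnxt]
      exact Finset.min'_le _ _ (Finset.mem_filter.2 ⟨hUsub hbU, hpb⟩)
    have hnAc : nxt S p ∈ Ac := by
      apply hIcc
      rw [Finset.mem_Icc]
      exact ⟨by rw [hnxt]; exact hnxtmem.2, hnb⟩
    exact not_mem_of_mem_coSet hnAc (hTA hnT)


end Injectivity

/-- the map `Ψ : 𝒜_{α,β} → binom([l+k],k)` is injective. -/
theorem statement1 (α β : List ℕ) (hα : IsComp α) (hβ : IsComp β)
    (A B : Finset ℕ)
    (hA : A ∈ calA α.sum β.sum (setComp α) (setComp β))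
    (hB : B ∈ calA α.sum β.sum (setComp α) (setComp β))
    (h : Psi α.sum β.sum (setComp α) (setComp β) A =
         Psi α.sum β.sum (setComp α) (setComp β) B) :
    A = B := by
  rw [calA, Finset.mem_filter, Finset.mem_powersetCard] at hA hB
  obtain ⟨⟨hA1, hA2⟩, hA3⟩ := hA
  obtain ⟨⟨hB1, hB2⟩, hB3⟩ := hB
  by_cases hn0 : β = []
  · have hA0 : A = ∅ := Finset.card_eq_zero.1 (by rw [hA2, hn0]; rfl)
    have hB0 : B = ∅ := Finset.card_eq_zero.1 (by rw [hB2, hn0]; rfl)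
    rw [hA0, hB0]
  by_cases hm0 : α = []
  · have hms : α.sum = 0 := by rw [hm0]; rfl
    have hIA : A = Finset.Icc 1 (α.sum + β.sum) := by
      apply Finset.eq_of_subset_of_card_le hA1
      rw [Nat.card_Icc, hA2]
      omega
    have hIB : B = Finset.Icc 1 (α.sum + β.sum) := by
      apply Finset.eq_of_subset_of_card_le hB1
      rw [Nat.card_Icc, hB2]
      omega
    rw [hIA, hIB]
  rw [master hα hβ hm0 hn0 hA1 hA2 hA3, h, ← master hα hβ hm0 hn0 hB1 hB2 hB3]


end
end QSymPaper
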